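/- Let 0 < d, 2d ≤ s, and let X, Y be independent random variables each uniformly distributed on [0,s]. For any r with d/s ≤ r ≤ 1 − d/s, the diversified position ν = (1−r)X + rY satisfies P(ν < d) = (1/2)·(d/s)²·(1/(r(1−r))). -/

import Mathlib

open MeasureTheory ProbabilityTheory Set

/-- The uniform probability distribution on the interval `[0, s]`. -/
noncomputable def uniformOnIcc (s : ℝ) : Measure ℝ :=
  (ENNReal.ofReal s)⁻¹ • (volume.restrict (Icc (0 : ℝ) s))

/-- for `d/s ≤ r ≤ 1 - d/s`, the diversified position `ν = (1-r)X + rY`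
satisfies `P(ν < d) = (1/2)·(d/s)²·(1/(r(1-r)))`. -/
theorem prob_individual_default_large_r
    {Ω : Type*} [MeasurableSpace Ω] (P : Measure Ω) [IsProbabilityMeasure P]
    (s d : ℝ) (hd : 0 < d) (hs : 2 * d ≤ s)
    (X Y : Ω → ℝ) (hXm : Measurable X) (hYm : Measurable Y)
    (hX : P.map X = uniformOnIcc s) (hY : P.map Y = uniformOnIcc s)
    (hXY : IndepFun X Y P)
    (r : ℝ) (hr0 : d / s ≤ r) (hr1 : r ≤ 1 - d / s) :
    P {ω | (1 - r) * X ω + r * Y ω < d}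
      = ENNReal.ofReal ((1 / 2) * (d / s) ^ 2 * (1 / (r * (1 - r)))) := by
  have hs0 : 0 < s := by linarith
  have hds : 0 < d / s := div_pos hd hs0
  have hr : 0 < r := lt_of_lt_of_le hds hr0
  have h1r : 0 < 1 - r := lt_of_lt_of_le hds (by linarith)
  have hdrs : d ≤ r * s := (div_le_iff₀ hs0).mp hr0
  have hdas : d ≤ (1 - r) * s := (div_le_iff₀ hs0).mp (by linarith)
  set a : ℝ := 1 - r with ha
  -- joint law
  have hmap : P.map (fun ω => (X ω, Y ω)) = (uniformOnIcc s).prod (uniformOnIcc s) :=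
    ((indepFun_iff_map_prod_eq_prod_map_map hXm.aemeasurable hYm.aemeasurable).mp hXY).trans
      (by rw [hX, hY])
  have hTm : MeasurableSet {p : ℝ × ℝ | a * p.1 + r * p.2 < d} :=
    measurableSet_lt ((measurable_fst.const_mul a).add (measurable_snd.const_mul r))
      measurable_const
  have key : P {ω | a * X ω + r * Y ω < d}
      = ((uniformOnIcc s).prod (uniformOnIcc s)) {p : ℝ × ℝ | a * p.1 + r * p.2 < d} := by
    rw [← hmap, Measure.map_apply (hXm.prodMk hYm) hTm]
    rfl
  haveI : SFinite (uniformOnIcc s) := by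
    unfold uniformOnIcc; infer_instance
  rw [key]
  -- slice measure
  have hslice : ∀ x : ℝ, x ∈ Icc (0:ℝ) s →
      (uniformOnIcc s) {y : ℝ | a * x + r * y < d}
        = (ENNReal.ofReal s)⁻¹ * ENNReal.ofReal ((d - a * x) / r) := by
    intro x hx
    have hset : {y : ℝ | a * x + r * y < d} = Iio ((d - a * x) / r) := by
      ext y
      rw [mem_setOf_eq, mem_Iio, lt_div_iff₀ hr]
      constructor <;> intro h <;> nlinarith [mul_comm y r]
    have hts : (d - a * x) / r ≤ s := by
      rw [div_le_iff₀ hr]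
      nlinarith [hx.1]
    have hint : Iio ((d - a * x) / r) ∩ Icc 0 s = Ico 0 ((d - a * x) / r) := by
      ext y
      simp only [mem_inter_iff, mem_Iio, mem_Icc, mem_Ico]
      constructor
      · rintro ⟨h1, h2, h3⟩; exact ⟨h2, h1⟩
      · rintro ⟨h1, h2⟩; exact ⟨h2, h1, le_trans (le_of_lt h2) hts⟩
    rw [hset]
    unfold uniformOnIcc
    rw [Measure.smul_apply, Measure.restrict_apply measurableSet_Iio, hint,
      Real.volume_Ico, smul_eq_mul, sub_zero]
  -- product formula
  rw [Measure.prod_apply hTm]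
  have hpre : ∀ x : ℝ, (Prod.mk x ⁻¹' {p : ℝ × ℝ | a * p.1 + r * p.2 < d})
      = {y : ℝ | a * x + r * y < d} := fun x => rfl
  simp only [hpre]
  have hae : ∀ᵐ x ∂(uniformOnIcc s), x ∈ Icc (0:ℝ) s := by
    have h := ae_restrict_mem (μ := (volume : Measure ℝ)) (measurableSet_Icc (a := (0:ℝ)) (b := s))
    rw [ae_iff] at h ⊢
    unfold uniformOnIcc
    rw [Measure.smul_apply, h, smul_eq_mul, mul_zero]
  rw [lintegral_congr_ae (hae.mono fun x hx => hslice x hx)]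
  rw [show (uniformOnIcc s : Measure ℝ)
      = (ENNReal.ofReal s)⁻¹ • (volume.restrict (Icc (0 : ℝ) s)) from rfl,
    lintegral_smul_measure, lintegral_const_mul' _ _ (by simpa using hs0)]
  -- now compute the inner lintegral
  have hcont : Continuous fun x : ℝ => max ((d - a * x) / r) 0 :=
    ((continuous_const.sub (continuous_const.mul continuous_id)).div_const r).max
      continuous_const
  have hofr : ∀ x : ℝ, ENNReal.ofReal ((d - a * x) / r)
      = ENNReal.ofReal (max ((d - a * x) / r) 0) := by
    intro x
    rcases le_total ((d - a * x) / r) 0 with h | h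
    · rw [max_eq_right h, ENNReal.ofReal_eq_zero.mpr h, ENNReal.ofReal_zero]
    · rw [max_eq_left h]
  simp only [hofr]
  have hJ : ∫⁻ x in Icc (0:ℝ) s, ENNReal.ofReal (max ((d - a * x) / r) 0)
      = ENNReal.ofReal (∫ x in Icc (0:ℝ) s, max ((d - a * x) / r) 0) := by
    rw [ofReal_integral_eq_lintegral_ofReal (hcont.integrableOn_Icc)
      (Filter.Eventually.of_forall fun x => le_max_right _ _)]
  rw [hJ]
  -- compute the real integral
  have hda : 0 < d / a := div_pos hd h1r
  have hdas' : d / a ≤ s := by rw [div_le_iff₀ h1r]; linarith [mul_comm s a]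
  have hreal : ∫ x in Icc (0:ℝ) s, max ((d - a * x) / r) 0 = d ^ 2 / (2 * a * r) := by
    rw [integral_Icc_eq_integral_Ioc, ← intervalIntegral.integral_of_le hs0.le]
    rw [← intervalIntegral.integral_add_adjacent_intervals (b := d / a)
      (hcont.intervalIntegrable _ _) (hcont.intervalIntegrable _ _)]
    have h1 : ∫ x in (0:ℝ)..(d / a), max ((d - a * x) / r) 0
        = ∫ x in (0:ℝ)..(d / a), (d - a * x) / r := by
      apply intervalIntegral.integral_congr
      intro x hx
      rw [uIcc_of_le hda.le] at hx
      have : 0 ≤ d - a * x := by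
        have := hx.2
        rw [le_div_iff₀ h1r] at this
        nlinarith [mul_comm x a]
      exact max_eq_left (div_nonneg this hr.le)
    have h2 : ∫ x in (d / a)..s, max ((d - a * x) / r) 0 = 0 := by
      rw [intervalIntegral.integral_congr (g := fun _ => (0:ℝ)), intervalIntegral.integral_zero]
      intro x hx
      rw [uIcc_of_le hdas'] at hx
      have : d - a * x ≤ 0 := by
        have := hx.1
        rw [div_le_iff₀ h1r] at this
        nlinarith [mul_comm x a]
      exact max_eq_right (div_nonpos_of_nonpos_of_nonneg this hr.le)
    rw [h1, h2, add_zero]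
    rw [intervalIntegral.integral_div]
    have : ∫ x in (0:ℝ)..(d / a), (d - a * x) = d * (d / a) - a * ((d/a)^2 - 0^2)/2 := by
      rw [intervalIntegral.integral_sub intervalIntegrable_const
        ((show Continuous fun x : ℝ => a * x by fun_prop).intervalIntegrable _ _),
        intervalIntegral.integral_const, intervalIntegral.integral_const_mul,
        integral_id]
      simp [smul_eq_mul]
      ring
    rw [this]
    field_simp
    ring
  rw [hreal]
  -- final arithmetic in ENNReal
  rw [← ENNReal.ofReal_inv_of_pos hs0, ← ENNReal.ofReal_mul (by positivity),
    smul_eq_mul, ← ENNReal.ofReal_mul (by positivity)]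
  congr 1
  field_simp
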